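/- The double integral of 1/(√(x₁x₂)(1 − x₁x₂)) over the open unit square (0,1)² equals π²/2. -/

import Mathlib

open MeasureTheory Real

lemma single_int (n : ℕ) :
    ∫⁻ x in Set.Ioo (0:ℝ) 1, ENNReal.ofReal (x ^ ((n:ℝ) - 1/2)) =
      ENNReal.ofReal (2 / (2*(n:ℝ)+1)) := by
  have hr : (-1:ℝ) < (n:ℝ) - 1/2 := by
    have : (0:ℝ) ≤ n := Nat.cast_nonneg n
    linarith
  have hint : IntegrableOn (fun x : ℝ => x ^ ((n:ℝ) - 1/2)) (Set.Ioo 0 1) volume := by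
    have := (intervalIntegral.intervalIntegrable_rpow' (a := 0) (b := 1) hr)
    rw [intervalIntegrable_iff_integrableOn_Ioc_of_le zero_le_one] at this
    exact this.mono_set Set.Ioo_subset_Ioc_self
  have hnn : 0 ≤ᵐ[volume.restrict (Set.Ioo (0:ℝ) 1)] fun x : ℝ => x ^ ((n:ℝ) - 1/2) := by
    filter_upwards [ae_restrict_mem measurableSet_Ioo] with x hx
    exact Real.rpow_nonneg hx.1.le _
  rw [← ofReal_integral_eq_lintegral_ofReal hint hnn]
  congr 1
  rw [← integral_Ioc_eq_integral_Ioo, ← intervalIntegral.integral_of_le zero_le_one,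
    integral_rpow (Or.inl hr)]
  rw [Real.one_rpow, Real.zero_rpow (by linarith)]
  rw [sub_zero, show (n:ℝ) - 1/2 + 1 = (2*(n:ℝ)+1)/2 by ring, one_div_div]

set_option maxHeartbeats 1000000 in
lemma odd_basel : HasSum (fun n : ℕ => (1:ℝ) / ((2*n+1):ℝ) ^ 2) (π ^ 2 / 8) := by
  have h := hasSum_zeta_two
  have hinj : Function.Injective (fun n : ℕ => 2 * n + 1) :=
    (add_left_injective 1).comp (mul_right_injective₀ (two_ne_zero' ℕ))
  have heven : HasSum (fun n : ℕ => (1:ℝ) / ((2*n:ℕ):ℝ) ^ 2) (π ^ 2 / 24) := by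
    have h4 := h.div_const 4
    convert h4 using 1
    · rfl
    · funext n
      rcases Nat.eq_zero_or_pos n with rfl | hn
      · simp
      · have : (n:ℝ) ≠ 0 := Nat.cast_ne_zero.mpr hn.ne'
        push_cast
        field_simp
        ring
    · ring
  have hodd_summable : Summable (fun n : ℕ => (1:ℝ) / ((2*n+1:ℕ):ℝ) ^ 2) :=
    h.summable.comp_injective hinj
  obtain ⟨s, hs⟩ := hodd_summable
  have hcomb : HasSum (fun n : ℕ => (1:ℝ) / (n:ℝ) ^ 2) (π ^ 2 / 24 + s) := heven.even_add_odd hs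
  have huniq : π ^ 2 / 24 + s = π ^ 2 / 6 := hcomb.unique h
  have hs8 : s = π ^ 2 / 8 := by linarith
  rw [← hs8]
  exact_mod_cast hs

lemma ptwise {x y : ℝ} (hx : x ∈ Set.Ioo (0:ℝ) 1) (hy : y ∈ Set.Ioo (0:ℝ) 1) :
    HasSum (fun n : ℕ => x ^ ((n:ℝ) - 1/2) * y ^ ((n:ℝ) - 1/2))
      (1 / (Real.sqrt (x*y) * (1 - x*y))) := by
  obtain ⟨hx0, hx1⟩ := hx
  obtain ⟨hy0, hy1⟩ := hy
  have ht0 : 0 < x*y := mul_pos hx0 hy0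
  have ht1 : x*y < 1 := by nlinarith
  have hgeom : HasSum (fun n : ℕ => (x*y) ^ n) ((1 - x*y)⁻¹) :=
    hasSum_geometric_of_lt_one ht0.le ht1
  have h2 := hgeom.mul_right ((Real.sqrt (x*y))⁻¹)
  have key : (fun n : ℕ => x ^ ((n:ℝ) - 1/2) * y ^ ((n:ℝ) - 1/2)) =
      fun n : ℕ => (x*y) ^ n * (Real.sqrt (x*y))⁻¹ := by
    funext n
    rw [Real.rpow_sub hx0, Real.rpow_sub hy0, Real.rpow_natCast, Real.rpow_natCast,
      ← Real.sqrt_eq_rpow, ← Real.sqrt_eq_rpow, Real.sqrt_mul hx0.le, mul_pow]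
    have h1 : Real.sqrt x ≠ 0 := (Real.sqrt_pos.mpr hx0).ne'
    have h2 : Real.sqrt y ≠ 0 := (Real.sqrt_pos.mpr hy0).ne'
    field_simp
  have hval : 1 / (Real.sqrt (x*y) * (1 - x*y)) = (1 - x*y)⁻¹ * (Real.sqrt (x*y))⁻¹ := by
    rw [one_div, mul_inv, mul_comm]
  rw [key, hval]
  exact h2

theorem stmt_0 :
    ∫ p in (Set.Ioo (0:ℝ) 1 ×ˢ Set.Ioo (0:ℝ) 1),
      1 / (Real.sqrt (p.1 * p.2) * (1 - p.1 * p.2)) = π ^ 2 / 2 := by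
  set S : Set (ℝ × ℝ) := Set.Ioo (0:ℝ) 1 ×ˢ Set.Ioo (0:ℝ) 1 with hS
  have hSm : MeasurableSet S := (measurableSet_Ioo.prod measurableSet_Ioo)
  have hmul : Measurable fun p : ℝ × ℝ => p.1 * p.2 := measurable_fst.mul measurable_snd
  have hmeas : Measurable (fun p : ℝ × ℝ => 1 / (Real.sqrt (p.1 * p.2) * (1 - p.1 * p.2))) :=
    measurable_const.div ((Real.continuous_sqrt.measurable.comp hmul).mul (measurable_const.sub hmul))
  -- step 1: Bochner integral = lintegral
  rw [integral_eq_lintegral_of_nonneg_ae]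
  rotate_left
  · filter_upwards [ae_restrict_mem hSm] with p hp
    have h1 : 0 < p.1 * p.2 := mul_pos hp.1.1 hp.2.1
    have h2 : p.1 * p.2 < 1 := by nlinarith [hp.1.2, hp.2.2, hp.1.1.le, hp.2.1.le]
    have hden : 0 < Real.sqrt (p.1 * p.2) * (1 - p.1 * p.2) :=
      mul_pos (Real.sqrt_pos.mpr h1) (by linarith)
    exact div_nonneg zero_le_one hden.le
  · exact hmeas.aestronglyMeasurable
  -- step 2: rewrite the lintegral as a sum
  have hcong : ∫⁻ p in S, ENNReal.ofReal (1 / (Real.sqrt (p.1 * p.2) * (1 - p.1 * p.2))) =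
      ∫⁻ p in S, ∑' n : ℕ, ENNReal.ofReal (p.1 ^ ((n:ℝ) - 1/2) * p.2 ^ ((n:ℝ) - 1/2)) := by
    apply setLIntegral_congr_fun hSm
    intro p hp
    beta_reduce
    have hps := ptwise hp.1 hp.2
    rw [← hps.tsum_eq, ENNReal.ofReal_tsum_of_nonneg]
    · intro n
      exact mul_nonneg (Real.rpow_nonneg hp.1.1.le _) (Real.rpow_nonneg hp.2.1.le _)
    · exact hps.summable
  rw [hcong, lintegral_tsum]
  swap
  · intro n
    apply ContinuousOn.aemeasurable _ hSm
    apply ENNReal.continuous_ofReal.comp_continuousOn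
    apply ContinuousOn.mul
    · exact ContinuousOn.rpow_const continuous_fst.continuousOn
        (fun p hp => Or.inl hp.1.1.ne')
    · exact ContinuousOn.rpow_const continuous_snd.continuousOn
        (fun p hp => Or.inl hp.2.1.ne')
  -- step 3: compute each term
  have hterm : ∀ n : ℕ, ∫⁻ p in S, ENNReal.ofReal (p.1 ^ ((n:ℝ) - 1/2) * p.2 ^ ((n:ℝ) - 1/2)) =
      ENNReal.ofReal (4 / (2*(n:ℝ)+1) ^ 2) := by
    intro n
    have hsplit : ∫⁻ p in S, ENNReal.ofReal (p.1 ^ ((n:ℝ) - 1/2) * p.2 ^ ((n:ℝ) - 1/2)) =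
        ∫⁻ p in S, ENNReal.ofReal (p.1 ^ ((n:ℝ) - 1/2)) * ENNReal.ofReal (p.2 ^ ((n:ℝ) - 1/2)) := by
      apply setLIntegral_congr_fun hSm
      intro p hp
      beta_reduce
      rw [ENNReal.ofReal_mul (Real.rpow_nonneg hp.1.1.le _)]
    rw [hsplit, hS, Measure.volume_eq_prod, ← Measure.prod_restrict,
      lintegral_prod_mul (f := fun x : ℝ => ENNReal.ofReal (x ^ ((n:ℝ) - 1/2)))
        (g := fun x : ℝ => ENNReal.ofReal (x ^ ((n:ℝ) - 1/2))), single_int n]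
    · rw [← ENNReal.ofReal_mul (by positivity)]
      congr 1
      rw [div_mul_div_comm]
      norm_num
      ring
    · exact ContinuousOn.aemeasurable (ENNReal.continuous_ofReal.comp_continuousOn
        (ContinuousOn.rpow_const continuousOn_id (fun x hx => Or.inl hx.1.ne')))
        measurableSet_Ioo
    · exact ContinuousOn.aemeasurable (ENNReal.continuous_ofReal.comp_continuousOn
        (ContinuousOn.rpow_const continuousOn_id (fun x hx => Or.inl hx.1.ne')))
        measurableSet_Ioo
  simp_rw [hterm]
  -- step 4: sum the series
  have hsum : HasSum (fun n : ℕ => (4:ℝ) / (2*(n:ℝ)+1) ^ 2) (π ^ 2 / 2) := by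
    have h := odd_basel.mul_left 4
    rw [show (4:ℝ) * (π ^ 2 / 8) = π ^ 2 / 2 by ring] at h
    have heq : (fun n : ℕ => (4:ℝ) / (2*(n:ℝ)+1) ^ 2) =
        fun n : ℕ => 4 * ((1:ℝ) / ((2*n+1):ℝ) ^ 2) := by
      funext n; rw [mul_one_div]
    rw [heq]
    exact h
  rw [← ENNReal.ofReal_tsum_of_nonneg (fun n => by positivity) hsum.summable,
    hsum.tsum_eq, ENNReal.toReal_ofReal (by positivity)]
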